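/- Let n be a finite type and A an n×n complex matrix, and let f_A : ℂ → ℂ be defined by f_A(q) = det(∑_{k=0}^{∞} (1/(k+1)!) (qA)^k). Then f_A(0) = 1, and f_A has derivative (trace A)/2 at q = 0. (That is, in the Taylor expansion det_V((e^{qA}−1)/(qA)) = ∑_k q^k T_k(A), one has T_0 = 1 and T_1(A) = (1/2)·Tr(A).) -/

import Mathlib

open Nat Matrix

section AuxNorm

attribute [local instance] Matrix.linftyOpNormedRing

lemma stmt9_exists_entry_pow_bound {n : Type*} [Fintype n] [DecidableEq n]
    (A : Matrix n n ℂ) : ∃ C : ℝ, 1 ≤ C ∧ ∀ (k : ℕ) (a b : n), ‖(A ^ k) a b‖ ≤ C ^ k := by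
  have entry_le : ∀ (B : Matrix n n ℂ) (a b : n), ‖B a b‖ ≤ ‖B‖ := by
    intro B a b
    rw [Matrix.linfty_opNorm_def]
    have h1 : ‖B a b‖₊ ≤ ∑ j, ‖B a j‖₊ :=
      Finset.single_le_sum (f := fun j => ‖B a j‖₊) (fun _ _ => _root_.zero_le) (Finset.mem_univ b)
    have h2 : (∑ j, ‖B a j‖₊) ≤ Finset.univ.sup fun i : n => ∑ j, ‖B i j‖₊ :=
      Finset.le_sup (f := fun i : n => ∑ j, ‖B i j‖₊) (Finset.mem_univ a)
    exact_mod_cast h1.trans h2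
  refine ⟨max ‖A‖ 1, le_max_right _ _, fun k a b => ?_⟩
  rcases Nat.eq_zero_or_pos k with rfl | hk
  · simp only [pow_zero]
    rcases eq_or_ne a b with rfl | hab
    · simp [Matrix.one_apply_eq]
    · simp [Matrix.one_apply_ne hab]
  · calc ‖(A ^ k) a b‖ ≤ ‖A ^ k‖ := entry_le _ a b
      _ ≤ ‖A‖ ^ k := norm_pow_le' A hk
      _ ≤ (max ‖A‖ 1) ^ k := pow_le_pow_left₀ (norm_nonneg _) (le_max_left _ _) k

end AuxNorm

/-- In the Taylor expansion `det((e^{qA}-1)/(qA)) = ∑ₖ qᵏ Tₖ(A)`, one has `T₀ = 1` and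
`T₁(A) = Tr(A)/2`. -/
theorem stmt9 {n : Type*} [Fintype n] [DecidableEq n] (A : Matrix n n ℂ) :
    (fun q : ℂ => (∑' k : ℕ, ((k + 1)! : ℂ)⁻¹ • (q • A) ^ k).det) 0 = 1 ∧
    HasDerivAt (fun q : ℂ => (∑' k : ℕ, ((k + 1)! : ℂ)⁻¹ • (q • A) ^ k).det)
      (A.trace / 2) 0 := by
  classical
  obtain ⟨C, hC1, hC⟩ := stmt9_exists_entry_pow_bound A
  have hC0 : (0 : ℝ) ≤ C := zero_le_one.trans hC1
  -- the matrix-valued function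
  set F : ℂ → Matrix n n ℂ := fun q => ∑' k : ℕ, ((k + 1)! : ℂ)⁻¹ • (q • A) ^ k with hFdef
  have hF0 : F 0 = 1 := by
    simp only [hFdef]
    rw [tsum_eq_single 0]
    · simp
    · intro k hk
      rw [zero_smul, zero_pow hk, smul_zero]
  -- scalar entry tsums
  set g : n → n → ℕ → ℂ → ℂ :=
    fun a b k q => ((k + 1)! : ℂ)⁻¹ * q ^ k * (A ^ k) a b with hgdef
  have hgbound : ∀ a b k (q : ℂ), ‖g a b k q‖ ≤ (‖q‖ * C) ^ k / k ! := by
    intro a b k q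
    rw [hgdef]
    simp only [norm_mul, norm_pow, norm_inv, Complex.norm_natCast]
    have h1 : ‖(A ^ k) a b‖ ≤ C ^ k := hC k a b
    have h2 : ((k + 1)! : ℝ)⁻¹ ≤ ((k ! : ℝ))⁻¹ := by
      apply inv_anti₀
      · exact_mod_cast Nat.factorial_pos k
      · exact_mod_cast Nat.factorial_le (Nat.le_succ k)
    calc ((k + 1)! : ℝ)⁻¹ * ‖q‖ ^ k * ‖(A ^ k) a b‖
        ≤ ((k ! : ℝ))⁻¹ * ‖q‖ ^ k * C ^ k := by
          apply mul_le_mul _ h1 (norm_nonneg _) _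
          · exact mul_le_mul_of_nonneg_right h2 (by positivity)
          · positivity
      _ = (‖q‖ * C) ^ k / k ! := by rw [mul_pow]; ring
  have hgsummable : ∀ a b (q : ℂ), Summable (fun k => g a b k q) := by
    intro a b q
    apply Summable.of_norm
    exact Summable.of_nonneg_of_le (fun k => norm_nonneg _) (fun k => hgbound a b k q)
      (Real.summable_pow_div_factorial (‖q‖ * C))
  -- entrywise description of F
  have hentry : ∀ (q : ℂ) (a b : n), F q a b = ∑' k, g a b k q := by
    intro q a b
    have hs : ∀ k : ℕ, ((k + 1)! : ℂ)⁻¹ • (q • A) ^ k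
        = (((k + 1)! : ℂ)⁻¹ * q ^ k) • A ^ k := by
      intro k; rw [smul_pow, smul_smul]
    have hsum2 : ∀ a : n, Summable (fun k => ((((k + 1)! : ℂ)⁻¹ * q ^ k) • A ^ k) a) := by
      intro a
      rw [Pi.summable]
      intro b
      exact (hgsummable a b q).congr (fun k => by rw [hgdef]; simp [mul_comm])
    have hsum1 : Summable (fun k => (((k + 1)! : ℂ)⁻¹ * q ^ k) • A ^ k) := by
      exact Pi.summable.2 hsum2
    rw [hFdef]
    simp only [hs]
    erw [tsum_apply hsum1, tsum_apply (hsum2 a)]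
    exact tsum_congr fun k => by rw [hgdef]; simp [mul_comm]
  -- derivative of each entry at 0
  have hder : ∀ a b : n, HasDerivAt (fun q => F q a b) ((2 : ℂ)⁻¹ * A a b) 0 := by
    intro a b
    have hfun : (fun q => F q a b) = fun q => ∑' k, g a b k q :=
      funext fun q => hentry q a b
    rw [hfun]
    have key := hasDerivAt_tsum_of_isPreconnected
      (u := fun k : ℕ => C ^ k / k !)
      (g := fun k q => g a b k q)
      (g' := fun k q => ((k + 1)! : ℂ)⁻¹ * ((k : ℂ) * q ^ (k - 1)) * (A ^ k) a b)
      (Real.summable_pow_div_factorial C)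
      (Metric.isOpen_ball (x := (0 : ℂ)) (ε := 1))
      ((convex_ball (0 : ℂ) 1).isPreconnected)
      (fun k q _ => by
        rw [hgdef]
        exact ((hasDerivAt_pow k q).const_mul (((k + 1)! : ℂ)⁻¹)).mul_const ((A ^ k) a b))
      (fun k q hq => ?_)
      (Metric.mem_ball_self one_pos)
      ((hgsummable a b 0))
      (Metric.mem_ball_self one_pos)
    · have htsum : (∑' k : ℕ, ((k + 1)! : ℂ)⁻¹ * ((k : ℂ) * (0:ℂ) ^ (k - 1)) * (A ^ k) a b)
          = (2 : ℂ)⁻¹ * A a b := by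
        rw [tsum_eq_single 1]
        · norm_num
        · intro k hk
          match k, hk with
          | 0, _ => simp
          | (m+2), _ => simp [zero_pow (Nat.succ_ne_zero m)]
      rw [← htsum]
      exact key
    · -- the bound on the derivative on the unit ball
      have hq1 : ‖q‖ ≤ 1 := le_of_lt (by simpa using hq)
      simp only [norm_mul, norm_pow, norm_inv, Complex.norm_natCast]
      have h1 : ‖(A ^ k) a b‖ ≤ C ^ k := hC k a b
      have h2 : ‖q‖ ^ (k - 1) ≤ 1 := pow_le_one₀ (norm_nonneg _) hq1
      have h3 : ((k + 1)! : ℝ)⁻¹ * ((k : ℝ) * ‖q‖ ^ (k - 1)) ≤ (k ! : ℝ)⁻¹ := by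
        have hk1 : ((k + 1)! : ℝ)⁻¹ * (k : ℝ) ≤ (k ! : ℝ)⁻¹ := by
          rw [Nat.factorial_succ]
          push_cast
          rw [mul_inv]
          calc ((k : ℝ) + 1)⁻¹ * ((k ! : ℝ))⁻¹ * (k : ℝ)
              = ((k : ℝ) / ((k : ℝ) + 1)) * ((k ! : ℝ))⁻¹ := by ring
            _ ≤ 1 * ((k ! : ℝ))⁻¹ := by
                apply mul_le_mul_of_nonneg_right _ (by positivity)
                rw [div_le_one (by positivity)]
                linarith
            _ = ((k ! : ℝ))⁻¹ := one_mul _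
        calc ((k + 1)! : ℝ)⁻¹ * ((k : ℝ) * ‖q‖ ^ (k - 1))
            ≤ ((k + 1)! : ℝ)⁻¹ * ((k : ℝ) * 1) := by
              apply mul_le_mul_of_nonneg_left _ (by positivity)
              exact mul_le_mul_of_nonneg_left h2 (by positivity)
          _ = ((k + 1)! : ℝ)⁻¹ * (k : ℝ) := by ring
          _ ≤ (k ! : ℝ)⁻¹ := hk1
      calc ((k + 1)! : ℝ)⁻¹ * ((k : ℝ) * ‖q‖ ^ (k - 1)) * ‖(A ^ k) a b‖
          ≤ (k ! : ℝ)⁻¹ * C ^ k :=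
            mul_le_mul h3 h1 (norm_nonneg _) (by positivity)
        _ = C ^ k / k ! := by ring
  constructor
  · show (F 0).det = 1
    rw [hF0, Matrix.det_one]
  · -- derivative part
    have hdet : (fun q : ℂ => (F q).det)
        = fun q => ∑ σ : Equiv.Perm n, (Equiv.Perm.sign σ : ℂ) * ∏ i, F q (σ i) i :=
      funext fun q => Matrix.det_apply' (F q)
    show HasDerivAt (fun q : ℂ => (F q).det) (A.trace / 2) 0
    rw [hdet]
    have H : HasDerivAt
        (fun q : ℂ => ∑ σ : Equiv.Perm n, (Equiv.Perm.sign σ : ℂ) * ∏ i, F q (σ i) i)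
        (∑ σ : Equiv.Perm n, (Equiv.Perm.sign σ : ℂ) *
          (∑ i, (∏ j ∈ Finset.univ.erase i, F 0 (σ j) j) • ((2 : ℂ)⁻¹ * A (σ i) i))) 0 := by
      apply HasDerivAt.fun_sum
      intro σ _
      exact (HasDerivAt.fun_finset_prod (fun i _ => hder (σ i) i)).const_mul _
    have hval : (∑ σ : Equiv.Perm n, (Equiv.Perm.sign σ : ℂ) *
          (∑ i, (∏ j ∈ Finset.univ.erase i, F 0 (σ j) j) • ((2 : ℂ)⁻¹ * A (σ i) i)))
        = A.trace / 2 := by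
      rw [Finset.sum_eq_single 1]
      · simp only [hF0, Equiv.Perm.sign_one, Units.val_one, Int.cast_one, one_mul,
          Equiv.Perm.one_apply, Matrix.one_apply_eq, Finset.prod_const_one, one_smul]
        rw [Matrix.trace, Finset.sum_div]
        exact Finset.sum_congr rfl fun i _ => by
          rw [Matrix.diag_apply, div_eq_mul_inv, mul_comm]
      · intro σ _ hσ
        have hmoved : ∃ x, σ x ≠ x := by
          by_contra h
          push_neg at h
          exact hσ (Equiv.ext h)
        obtain ⟨j0, hj0⟩ := hmoved
        have hj1 : σ (σ j0) ≠ σ j0 := fun h => hj0 (σ.injective h)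
        have hne : σ j0 ≠ j0 := hj0
        have hsum0 : (∑ i, (∏ j ∈ Finset.univ.erase i, F 0 (σ j) j)
            • ((2 : ℂ)⁻¹ * A (σ i) i)) = 0 := by
          apply Finset.sum_eq_zero
          intro i _
          have : ∃ j, j ≠ i ∧ σ j ≠ j := by
            rcases eq_or_ne i j0 with rfl | h
            · exact ⟨σ i, hne, hj1⟩
            · exact ⟨j0, fun hh => h hh.symm, hj0⟩
          obtain ⟨j, hji, hjm⟩ := this
          have : (∏ j' ∈ Finset.univ.erase i, F 0 (σ j') j') = 0 := by
            apply Finset.prod_eq_zero (Finset.mem_erase.2 ⟨hji, Finset.mem_univ j⟩)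
            rw [hF0]
            exact Matrix.one_apply_ne hjm
          rw [this, zero_smul]
        rw [hsum0, mul_zero]
      · intro h
        exact absurd (Finset.mem_univ 1) h
    rw [hval] at H
    exact H
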